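/- Hölder's defect formula upper bound: for positive reals 0 < a_m ≤ ... ≤ a₁, the geometric mean satisfies (Π a_i)^{1/m} ≤ ((Σ a_i)/m) · exp(−Var(a/a₁)/2), where Var(z) = (1/m)Σ(z_i − mean(z))². -/

import Mathlib

/-- Empirical variance of a vector. -/
noncomputable def empVar {k : ℕ} (z : Fin k → ℝ) : ℝ :=
  (∑ i, (z i - (∑ j, z j) / k) ^ 2) / k


open Real Set

lemma keyDeriv (μ : ℝ) (hμ : 0 < μ) :
    ∀ y ∈ Set.Ioi (0:ℝ),
      HasDerivAt (fun y => Real.log μ + (y - μ)/μ - (y - μ)^2/2 - Real.log y)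
        ((y - μ) * (1 - μ * y) / (μ * y)) y := by
  intro y hy
  have hy0 : (0:ℝ) < y := hy
  have h1 : HasDerivAt (fun y : ℝ => Real.log μ + (y - μ)/μ - (y - μ)^2/2 - Real.log y)
      ((0 + 1/μ) - (↑2 * (y - μ)^(2-1) * 1)/2 - y⁻¹) y := by
    exact ((((hasDerivAt_const y (Real.log μ)).add
      (((hasDerivAt_id y).sub_const μ).div_const μ)).sub
      ((((hasDerivAt_id y).sub_const μ).pow 2).div_const 2)).sub
      (Real.hasDerivAt_log hy0.ne'))
  convert h1 using 1
  field_simp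
  ring

lemma key (μ x : ℝ) (hμ : 0 < μ) (hμ1 : μ ≤ 1) (hx : 0 < x) (hx1 : x ≤ 1) :
    Real.log x ≤ Real.log μ + (x - μ)/μ - (x - μ)^2/2 := by
  set F : ℝ → ℝ := fun y => Real.log μ + (y - μ)/μ - (y - μ)^2/2 - Real.log y with hF
  have hFμ : F μ = 0 := by simp [hF]
  have hcont : ∀ s : Set ℝ, s ⊆ Set.Ioi 0 → ContinuousOn F s := by
    intro s hs y hy
    exact ((keyDeriv μ hμ y (hs hy)).continuousAt).continuousWithinAt
  suffices h : 0 ≤ F x by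
    have := h
    simp only [hF] at this
    linarith
  rcases le_total x μ with hxμ | hμx
  · -- F antitone on [x, μ]
    have hsub : Set.Icc x μ ⊆ Set.Ioi 0 := fun y hy => lt_of_lt_of_le hx hy.1
    have hanti : AntitoneOn F (Set.Icc x μ) := by
      apply antitoneOn_of_deriv_nonpos (convex_Icc x μ) (hcont _ hsub)
      · intro y hy
        rw [interior_Icc] at hy
        exact ((keyDeriv μ hμ y (lt_trans hx hy.1)).differentiableAt).differentiableWithinAt
      intro y hy
      rw [interior_Icc] at hy
      have hy0 : (0:ℝ) < y := lt_trans hx hy.1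
      rw [(keyDeriv μ hμ y hy0).deriv]
      have h1 : y - μ ≤ 0 := by linarith [hy.2]
      have h2 : 0 ≤ 1 - μ * y := by nlinarith [hy.2]
      have h3 : 0 < μ * y := mul_pos hμ hy0
      exact div_nonpos_of_nonpos_of_nonneg (mul_nonpos_of_nonpos_of_nonneg h1 h2) h3.le
    have := hanti (Set.left_mem_Icc.mpr hxμ) (Set.right_mem_Icc.mpr hxμ) hxμ
    rwa [hFμ] at this
  · -- F monotone on [μ, x]
    have hsub : Set.Icc μ x ⊆ Set.Ioi 0 := fun y hy => lt_of_lt_of_le hμ hy.1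
    have hmono : MonotoneOn F (Set.Icc μ x) := by
      apply monotoneOn_of_deriv_nonneg (convex_Icc μ x) (hcont _ hsub)
      · intro y hy
        rw [interior_Icc] at hy
        exact ((keyDeriv μ hμ y (lt_trans hμ hy.1)).differentiableAt).differentiableWithinAt
      intro y hy
      rw [interior_Icc] at hy
      have hy0 : (0:ℝ) < y := lt_trans hμ hy.1
      rw [(keyDeriv μ hμ y hy0).deriv]
      have h1 : 0 ≤ y - μ := by linarith [hy.1]
      have h2 : 0 ≤ 1 - μ * y := by nlinarith [hy.2]
      have h3 : 0 < μ * y := mul_pos hμ hy0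
      exact div_nonneg (mul_nonneg h1 h2) h3.le
    have := hmono (Set.left_mem_Icc.mpr hμx) (Set.right_mem_Icc.mpr hμx) hμx
    rwa [hFμ] at this

/-- Hölder defect upper bound: for positive reals a₁ ≥ ... ≥ a_m > 0,
(Π a_i)^{1/m} ≤ ((Σ a_i)/m) · exp(−Var(a/a₁)/2), where a₁ is the largest entry. -/
theorem stmt7 {m : ℕ} (hm : 0 < m) (a : Fin m → ℝ) (hpos : ∀ i, 0 < a i)
    (hsorted : Antitone a) :
    (∏ i, a i) ^ ((1 : ℝ) / m) ≤
      ((∑ i, a i) / m) * Real.exp (-(empVar (fun i => a i / a ⟨0, hm⟩)) / 2) := by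
  have hmR : (0:ℝ) < m := Nat.cast_pos.mpr hm
  set c := a ⟨0, hm⟩ with hc
  have hc0 : 0 < c := hpos _
  set b : Fin m → ℝ := fun i => a i / c with hb
  have hb0 : ∀ i, 0 < b i := fun i => div_pos (hpos i) hc0
  have hb1 : ∀ i, b i ≤ 1 := by
    intro i
    have : a i ≤ c := hsorted (show (⟨0, hm⟩ : Fin m) ≤ i from Fin.mk_le_of_le_val (Nat.zero_le _))
    exact (div_le_one hc0).mpr this
  set μ : ℝ := (∑ i, b i) / m with hμdef
  have hS0 : 0 < ∑ i, b i :=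
    Finset.sum_pos (fun i _ => hb0 i) (Finset.univ_nonempty_iff.mpr ⟨⟨0, hm⟩⟩)
  have hμ0 : 0 < μ := div_pos hS0 hmR
  have hμ1 : μ ≤ 1 := by
    rw [hμdef, div_le_one hmR]
    calc ∑ i, b i ≤ ∑ _i : Fin m, (1:ℝ) := Finset.sum_le_sum (fun i _ => hb1 i)
    _ = m := by simp
  have hVar : empVar b = (∑ i, (b i - μ)^2) / m := by
    rw [empVar, hμdef]
  -- sum of logs bound
  have hsum : ∑ i, Real.log (b i) ≤ m * Real.log μ - (∑ i, (b i - μ)^2) / 2 := by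
    have h1 : ∑ i, Real.log (b i) ≤ ∑ i, (Real.log μ + (b i - μ)/μ - (b i - μ)^2/2) :=
      Finset.sum_le_sum (fun i _ => key μ (b i) hμ0 hμ1 (hb0 i) (hb1 i))
    have h2 : ∑ i, (Real.log μ + (b i - μ)/μ - (b i - μ)^2/2)
        = m * Real.log μ + ((∑ i, b i) - m * μ)/μ - (∑ i, (b i - μ)^2)/2 := by
      rw [Finset.sum_sub_distrib, Finset.sum_add_distrib, Finset.sum_const,
        Finset.card_univ, Fintype.card_fin, ← Finset.sum_div, ← Finset.sum_div,
        Finset.sum_sub_distrib, Finset.sum_const, Finset.card_univ, Fintype.card_fin]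
      push_cast
      ring
    have h3 : (∑ i, b i) - m * μ = 0 := by
      rw [hμdef]; field_simp; ring
    rw [h2, h3] at h1
    simpa using h1
  -- normalized inequality
  have hnorm : (∏ i, b i) ^ ((1:ℝ)/m) ≤ μ * Real.exp (-(empVar b) / 2) := by
    have hprodpos : 0 < ∏ i, b i := Finset.prod_pos (fun i _ => hb0 i)
    rw [Real.rpow_def_of_pos hprodpos, Real.log_prod (s := Finset.univ) (f := b) (fun i _ => (hb0 i).ne')]
    have : μ * Real.exp (-(empVar b) / 2) = Real.exp (Real.log μ + (-(empVar b) / 2)) := by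
      rw [Real.exp_add, Real.exp_log hμ0]
    rw [this]
    apply Real.exp_le_exp.mpr
    rw [hVar]
    calc (∑ i, Real.log (b i)) * (1/(m:ℝ))
        ≤ ((m:ℝ) * Real.log μ - (∑ i, (b i - μ)^2) / 2) * (1/(m:ℝ)) :=
          mul_le_mul_of_nonneg_right hsum (by positivity)
    _ = Real.log μ + -((∑ i, (b i - μ)^2) / m) / 2 := by field_simp; ring
  -- denormalize
  have hP : (∏ i, a i) ^ ((1:ℝ)/m) = c * (∏ i, b i) ^ ((1:ℝ)/m) := by
    have : ∏ i, a i = c ^ m * ∏ i, b i := by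
      calc ∏ i, a i = ∏ i, c * b i :=
            Finset.prod_congr rfl (fun i _ => by rw [hb]; field_simp)
      _ = (∏ _i : Fin m, c) * ∏ i, b i := Finset.prod_mul_distrib
      _ = c ^ m * ∏ i, b i := by
            rw [Finset.prod_const, Finset.card_univ, Fintype.card_fin]
    rw [this, Real.mul_rpow (by positivity) (Finset.prod_pos (fun i _ => hb0 i)).le,
      ← Real.rpow_natCast c m, ← Real.rpow_mul hc0.le]
    rw [show (m:ℝ) * (1/m) = 1 by field_simp]
    rw [Real.rpow_one]
  have hSa : (∑ i, a i) / m = c * μ := by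
    have h : ∑ i, a i = c * ∑ i, b i := by
      rw [Finset.mul_sum]
      exact Finset.sum_congr rfl (fun i _ => by rw [hb]; field_simp)
    rw [hμdef, h, mul_div_assoc]
  rw [hP, hSa]
  have : empVar (fun i => a i / a ⟨0, hm⟩) = empVar b := rfl
  rw [this, mul_assoc]
  exact mul_le_mul_of_nonneg_left hnorm hc0.le
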